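/- Let g : ℝ/ℤ → ℝ/ℤ be a map and O = {z̄(0), …, z̄(p−1)} a periodic orbit of period p with g(z̄(k)) = z̄(k+1 mod p), such that |(g^p)'| ≤ λ < 1 holds in the sense that d(g(x), g(y)) ≤ λ^{1/p} d(x,y) whenever x, y ∈ ⋃_k B(z̄(k), r). If x_{t+1} = g(x_t) + ξ_t with |ξ_t| ≤ ξ ≤ (1 − λ^{1/p})·r and x_0 ∈ B(z̄(k₀), r) for some k₀, then for all t ≥ 0, d(x_t, z̄(k₀ + t mod p)) ≤ λ^{t/p}·r + ξ/(1 − λ^{1/p}). -/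

import Mathlib

/-- Noisy tracking of a hyperbolic periodic attractor: if `g` maps the periodic orbit
`z̄(0),…,z̄(p−1)` cyclically, contracts distances by `λ^{1/p}` on the union of the `r`-balls
around the orbit, and `x_{t+1} = g(x_t) + ξ_t` with `|ξ_t| ≤ ξ ≤ (1 − λ^{1/p}) r` and
`x₀ ∈ B(z̄(k₀), r)`, then `d(x_t, z̄(k₀+t mod p)) ≤ λ^{t/p} r + ξ/(1 − λ^{1/p})`. -/
theorem stmt17 (p : ℕ) (hp : 0 < p) (g : AddCircle (1:ℝ) → AddCircle (1:ℝ))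
    (zbar : ZMod p → AddCircle (1:ℝ)) (horb : ∀ k, g (zbar k) = zbar (k + 1))
    (lam r ξ : ℝ) (hlam0 : 0 ≤ lam) (hlam1 : lam < 1) (hr : 0 < r)
    (hcontr : ∀ x y, x ∈ (⋃ k, Metric.closedBall (zbar k) r) →
      y ∈ (⋃ k, Metric.closedBall (zbar k) r) →
      dist (g x) (g y) ≤ lam ^ ((1 : ℝ) / (p : ℝ)) * dist x y)
    (x : ℕ → AddCircle (1:ℝ)) (ξs : ℕ → ℝ)
    (hrec : ∀ t, x (t + 1) = g (x t) + ((ξs t : ℝ) : AddCircle (1:ℝ)))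
    (hξs : ∀ t, |ξs t| ≤ ξ) (hξr : ξ ≤ (1 - lam ^ ((1 : ℝ) / (p : ℝ))) * r)
    (k₀ : ZMod p) (hx0 : dist (x 0) (zbar k₀) ≤ r) :
    ∀ t : ℕ, dist (x t) (zbar (k₀ + (t : ZMod p)))
      ≤ lam ^ ((t : ℝ) / (p : ℝ)) * r + ξ / (1 - lam ^ ((1 : ℝ) / (p : ℝ))) := by
  set μ : ℝ := lam ^ ((1 : ℝ) / (p : ℝ)) with hμ
  have hp' : (0:ℝ) < (p:ℝ) := by exact_mod_cast hp
  have hμ0 : 0 ≤ μ := Real.rpow_nonneg hlam0 _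
  have hμ1 : μ < 1 := Real.rpow_lt_one hlam0 hlam1 (by positivity)
  have h1μ : (0:ℝ) < 1 - μ := by linarith
  have hξ0 : 0 ≤ ξ := le_trans (abs_nonneg _) (hξs 0)
  have hpow : ∀ t : ℕ, lam ^ ((t : ℝ) / (p : ℝ)) = μ ^ t := by
    intro t
    rw [hμ, ← Real.rpow_natCast (lam ^ ((1:ℝ)/(p:ℝ))) t, ← Real.rpow_mul hlam0]
    congr 1
    field_simp
  have main : ∀ t : ℕ, dist (x t) (zbar (k₀ + (t : ZMod p)))
      ≤ μ ^ t * r + ξ * (1 - μ ^ t) / (1 - μ) := by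
    intro t
    induction t with
    | zero => simpa using hx0
    | succ t ih =>
      have hμt1 : μ ^ t ≤ 1 := pow_le_one₀ hμ0 (le_of_lt hμ1)
      have hμt0 : 0 ≤ μ ^ t := pow_nonneg hμ0 t
      -- the invariant bound is at most r
      have hdr : dist (x t) (zbar (k₀ + (t : ZMod p))) ≤ r := by
        refine ih.trans ?_
        have hdiv : ξ * (1 - μ ^ t) / (1 - μ) ≤ r * (1 - μ ^ t) := by
          rw [div_le_iff₀ h1μ]
          nlinarith
        nlinarith
      have hxmem : x t ∈ ⋃ k, Metric.closedBall (zbar k) r :=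
        Set.mem_iUnion.2 ⟨k₀ + (t : ZMod p), Metric.mem_closedBall.2 hdr⟩
      have hzmem : zbar (k₀ + (t : ZMod p)) ∈ ⋃ k, Metric.closedBall (zbar k) r :=
        Set.mem_iUnion.2 ⟨k₀ + (t : ZMod p), Metric.mem_closedBall.2 (by simp [le_of_lt hr])⟩
      have hcast : (((t+1 : ℕ)) : ZMod p) = (t : ZMod p) + 1 := by push_cast; ring
      have hgz : g (zbar (k₀ + (t : ZMod p))) = zbar (k₀ + ((t+1 : ℕ) : ZMod p)) := by
        rw [horb, hcast]; ring_nf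
      have hnoise : dist (x (t+1)) (g (x t)) ≤ ξ := by
        rw [hrec t, dist_eq_norm]
        have : g (x t) + ((ξs t : ℝ) : AddCircle (1:ℝ)) - g (x t)
            = ((ξs t : ℝ) : AddCircle (1:ℝ)) := by abel
        rw [this]
        calc ‖((ξs t : ℝ) : AddCircle (1:ℝ))‖ ≤ ‖ξs t‖ := QuotientAddGroup.norm_mk_le_norm
          _ ≤ ξ := by rw [Real.norm_eq_abs]; exact hξs t
      have hcontr' : dist (g (x t)) (zbar (k₀ + ((t+1 : ℕ) : ZMod p)))
          ≤ μ * dist (x t) (zbar (k₀ + (t : ZMod p))) := by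
        rw [← hgz]
        exact hcontr _ _ hxmem hzmem
      have htri := dist_triangle (x (t+1)) (g (x t)) (zbar (k₀ + ((t+1 : ℕ) : ZMod p)))
      have hstep : dist (x (t+1)) (zbar (k₀ + ((t+1 : ℕ) : ZMod p)))
          ≤ ξ + μ * (μ ^ t * r + ξ * (1 - μ ^ t) / (1 - μ)) := by
        have := mul_le_mul_of_nonneg_left ih hμ0
        linarith
      refine hstep.trans (le_of_eq ?_)
      field_simp
      ring
  intro t
  rw [hpow t]
  refine (main t).trans ?_
  have : ξ * (1 - μ ^ t) / (1 - μ) ≤ ξ / (1 - μ) := by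
    rw [div_le_div_iff₀ h1μ h1μ]
    nlinarith [mul_nonneg (mul_nonneg hξ0 h1μ.le) (pow_nonneg hμ0 t)]
  linarith
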